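/- arXiv:1312.3784 — 3 statements merged into one kernel-verified Lean document; each statement's English description precedes it below -/
import Mathlib

section
/- For every a, b, c in the loop algebra 𝔏 = Matrix (Fin N) (Fin N) (LaurentPolynomial ℂ), the cocycle identity holds: ψ([a,b],c) + ψ([b,c],a) + ψ([c,a],b) = 0. -/
noncomputable section

/-- The loop algebra: `N × N` matrices over Laurent polynomials, a Lie ring under the
commutator bracket `⁅a, b⁆ = a * b - b * a`. -/
abbrev Loop (N : ℕ) := Matrix (Fin N) (Fin N) (LaurentPolynomial ℂ)

/-- The matrix of `n`-th Laurent coefficients of the entries of `a`. -/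
def coeffM {N : ℕ} (a : Loop N) (n : ℤ) : Matrix (Fin N) (Fin N) ℂ :=
  fun i j => (a i j).coeff n

/-- The cocycle `ψ(a,b) = Σₙ n · trace(aₙ * b₋ₙ)`, i.e. `Res(tr((da/dt)·b))`. -/
def psi {N : ℕ} (a b : Loop N) : ℂ :=
  ∑ᶠ n : ℤ, (n : ℂ) * Matrix.trace (coeffM a n * coeffM b (-n))

/-- Coefficient lemmas for Laurent polynomials viewed as finsupps. -/
lemma lp_add_apply (f g : LaurentPolynomial ℂ) (m : ℤ) : (f + g).coeff m = f.coeff m + g.coeff m :=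
  Finsupp.add_apply f.coeff g.coeff m

lemma lp_sub_apply (f g : LaurentPolynomial ℂ) (m : ℤ) : (f - g).coeff m = f.coeff m - g.coeff m :=
  Finsupp.sub_apply f.coeff g.coeff m

lemma lp_sum_apply {ι : Type*} (s : Finset ι) (f : ι → LaurentPolynomial ℂ) (m : ℤ) :
    (∑ i ∈ s, f i).coeff m = ∑ i ∈ s, (f i).coeff m := by
  rw [AddMonoidAlgebra.coeff_sum]; exact Finsupp.finset_sum_apply s _ m

lemma lp_single_apply (n : ℤ) (c : ℂ) (m : ℤ) :
    (AddMonoidAlgebra.single n c : LaurentPolynomial ℂ).coeff m = if n = m then c else 0 :=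
  Finsupp.single_apply

/-- The derivative-like map `t d/dt` on Laurent polynomials. -/
def Dlp : LaurentPolynomial ℂ →+ LaurentPolynomial ℂ :=
  ((AddMonoidAlgebra.coeffAddEquiv (R := ℂ) (M := ℤ)).symm.toAddMonoidHom.comp
    (Finsupp.liftAddHom fun n : ℤ => (Finsupp.singleAddHom n).comp (AddMonoidHom.mulLeft (n : ℂ)))).comp
    (AddMonoidAlgebra.coeffAddEquiv (R := ℂ) (M := ℤ)).toAddMonoidHom

lemma Dlp_single (n : ℤ) (c : ℂ) :
    Dlp (AddMonoidAlgebra.single n c) = AddMonoidAlgebra.single n ((n : ℂ) * c) := by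
  show AddMonoidAlgebra.ofCoeff _ = AddMonoidAlgebra.ofCoeff _
  congr 1
  exact Finsupp.liftAddHom_apply_single
    (fun n : ℤ => (Finsupp.singleAddHom n).comp (AddMonoidHom.mulLeft (n : ℂ))) n c

lemma Dlp_apply (f : LaurentPolynomial ℂ) (m : ℤ) : (Dlp f).coeff m = (m : ℂ) * f.coeff m := by
  induction f using AddMonoidAlgebra.induction_linear with
  | zero => simp
  | add f g hf hg => rw [map_add, lp_add_apply, hf, hg, lp_add_apply, mul_add]
  | single n c =>
      rw [Dlp_single, lp_single_apply, lp_single_apply]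
      split_ifs with h
      · subst h; ring
      · simp

lemma Dlp_support (f : LaurentPolynomial ℂ) : (Dlp f).coeff.support ⊆ f.coeff.support := by
  intro n hn
  simp only [Finsupp.mem_support_iff, Dlp_apply] at hn ⊢
  exact fun h => hn (by simp [h])

lemma Dlp_mul (f g : LaurentPolynomial ℂ) : Dlp (f * g) = Dlp f * g + f * Dlp g := by
  induction f using AddMonoidAlgebra.induction_linear with
  | zero => simp
  | add f f' hf hf' =>
      rw [add_mul, map_add, hf, hf', map_add, add_mul, add_mul]; abel
  | single n c =>
      induction g using AddMonoidAlgebra.induction_linear with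
      | zero => simp
      | add g g' hg hg' =>
          rw [mul_add, map_add, hg, hg', map_add, mul_add, mul_add]; abel
      | single m d =>
          show Dlp (AddMonoidAlgebra.single n c * AddMonoidAlgebra.single m d) = _
          rw [AddMonoidAlgebra.single_mul_single, Dlp_single, Dlp_single, Dlp_single]
          show (AddMonoidAlgebra.single (n + m) (((n + m : ℤ) : ℂ) * (c * d)) : LaurentPolynomial ℂ) = _
          rw [AddMonoidAlgebra.single_mul_single, AddMonoidAlgebra.single_mul_single,
            ← AddMonoidAlgebra.single_add]
          congr 1
          push_cast
          ring

/-- Entrywise `Dlp` on matrices. -/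
def Dm {N : ℕ} (x : Loop N) : Loop N := Matrix.of fun i j => Dlp (x i j)

lemma Dm_apply {N : ℕ} (x : Loop N) (i j : Fin N) : Dm x i j = Dlp (x i j) := rfl

lemma Dm_mul {N : ℕ} (x y : Loop N) : Dm (x * y) = Dm x * y + x * Dm y := by
  ext i j
  simp only [Dm_apply, Matrix.mul_apply, Matrix.add_apply, map_sum, Dlp_mul,
    Finset.sum_add_distrib]

lemma Dm_sub {N : ℕ} (x y : Loop N) : Dm (x - y) = Dm x - Dm y := by
  ext i j
  simp [Dm_apply, Matrix.sub_apply, map_sub]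

/-- The "residue of the trace": constant coefficient of the trace. -/
def Tr {N : ℕ} (x : Loop N) : ℂ := (Matrix.trace x).coeff 0

lemma Tr_add {N : ℕ} (x y : Loop N) : Tr (x + y) = Tr x + Tr y := by
  rw [Tr, Tr, Tr, Matrix.trace_add, lp_add_apply]

lemma Tr_sub {N : ℕ} (x y : Loop N) : Tr (x - y) = Tr x - Tr y := by
  rw [Tr, Tr, Tr, Matrix.trace_sub, lp_sub_apply]

lemma Tr_cyc {N : ℕ} (x y : Loop N) : Tr (x * y) = Tr (y * x) := by
  rw [Tr, Matrix.trace_mul_comm]; rfl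

lemma Tr_assoc {N : ℕ} (x y z : Loop N) : Tr (x * y * z) = Tr (x * (y * z)) := by
  rw [mul_assoc]

lemma Tr_rot {N : ℕ} (x y z : Loop N) : Tr (x * (y * z)) = Tr (y * (z * x)) := by
  rw [Tr_cyc, mul_assoc]

lemma Tr_Dm {N : ℕ} (x : Loop N) : Tr (Dm x) = 0 := by
  rw [Tr, Matrix.trace, lp_sum_apply]
  refine Finset.sum_eq_zero fun i _ => ?_
  show (Dlp (x i i)).coeff 0 = 0
  rw [Dlp_apply]
  simp

/-- The union of the supports of the entries. -/
def suppM {N : ℕ} (a : Loop N) : Finset ℤ :=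
  Finset.univ.biUnion fun p : Fin N × Fin N => (a p.1 p.2).coeff.support

lemma entry_support_subset {N : ℕ} (a : Loop N) (i j : Fin N) :
    (a i j).coeff.support ⊆ suppM a := fun n hn =>
  Finset.mem_biUnion.2 ⟨(i, j), Finset.mem_univ _, hn⟩

lemma coeffM_eq_zero {N : ℕ} (a : Loop N) {n : ℤ} (hn : n ∉ suppM a) :
    coeffM a n = 0 := by
  ext i j
  simp only [coeffM, Matrix.zero_apply]
  by_contra h
  exact hn (entry_support_subset a i j (Finsupp.mem_support_iff.2 h))

lemma mul_coeff_zero (f g : LaurentPolynomial ℂ) {S : Finset ℤ} (hS : f.coeff.support ⊆ S) :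
    (f * g).coeff 0 = ∑ n ∈ S, f.coeff n * g.coeff (-n) := by
  classical
  rw [AddMonoidAlgebra.mul_apply]
  have h1 : ∀ a₁ : ℤ, ∀ b₁ : ℂ,
      (g.coeff.sum fun a₂ b₂ => if a₁ + a₂ = 0 then b₁ * b₂ else 0) = b₁ * g.coeff (-a₁) := by
    intro a₁ b₁
    rw [Finsupp.sum]
    have h2 : ∀ a₂ ∈ g.coeff.support, (if a₁ + a₂ = 0 then b₁ * g.coeff a₂ else 0)
        = if a₂ = -a₁ then b₁ * g.coeff a₂ else 0 := by
      intro a₂ _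
      congr 1
      simp only [eq_iff_iff]
      constructor <;> (intro h; omega)
    rw [Finset.sum_congr rfl h2, Finset.sum_ite_eq' g.coeff.support (-a₁) fun a₂ => b₁ * g.coeff a₂]
    split
    · rfl
    · simp_all [Finsupp.notMem_support_iff.1 ‹_›]
  rw [Finsupp.sum]
  rw [Finset.sum_congr rfl fun a₁ _ => h1 a₁ (f.coeff a₁)]
  exact Finset.sum_subset hS fun n _ hn => by
    simp [Finsupp.notMem_support_iff.1 hn]

lemma psi_eq_Tr {N : ℕ} (a b : Loop N) : psi a b = Tr (Dm a * b) := by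
  classical
  have hL : psi a b = ∑ n ∈ suppM a, (n : ℂ) * Matrix.trace (coeffM a n * coeffM b (-n)) := by
    apply finsum_eq_sum_of_support_subset
    intro n hn
    by_contra h
    apply hn
    have h0 : coeffM a n = 0 := coeffM_eq_zero a (by simpa using h)
    simp only [h0, Matrix.zero_mul, Matrix.trace_zero, mul_zero]
  rw [hL]
  have key : ∀ n : ℤ, (n : ℂ) * Matrix.trace (coeffM a n * coeffM b (-n))
      = ∑ i, ∑ k, (n : ℂ) * ((a i k).coeff n * (b k i).coeff (-n)) := by
    intro n
    rw [Matrix.trace]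
    simp only [Matrix.diag, Matrix.mul_apply, coeffM, Finset.mul_sum]
  rw [Finset.sum_congr rfl fun n _ => key n]
  have hR : ∀ i : Fin N, (((Dm a * b) i i : LaurentPolynomial ℂ)).coeff 0
      = ∑ k, ∑ n ∈ suppM a, (n : ℂ) * ((a i k).coeff n * (b k i).coeff (-n)) := by
    intro i
    rw [Matrix.mul_apply, lp_sum_apply]
    refine Finset.sum_congr rfl fun k _ => ?_
    rw [Dm_apply, mul_coeff_zero _ _ ((Dlp_support _).trans (entry_support_subset a i k))]
    exact Finset.sum_congr rfl fun n _ => by rw [Dlp_apply, mul_assoc]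
  have hT : Tr (Dm a * b) = ∑ i, (((Dm a * b) i i : LaurentPolynomial ℂ)).coeff 0 := by
    rw [Tr, Matrix.trace, lp_sum_apply]; rfl
  rw [hT, Finset.sum_congr rfl fun i _ => hR i, Finset.sum_comm]
  exact Finset.sum_congr rfl fun n _ => Finset.sum_comm

/-- The cocycle identity for ψ. -/
theorem psi_cocycle (N : ℕ) (hN : 0 < N) (a b c : Loop N) :
    psi ⁅a, b⁆ c + psi ⁅b, c⁆ a + psi ⁅c, a⁆ b = 0 := by
  have expand : ∀ x y z : Loop N, psi ⁅x, y⁆ z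
      = Tr (Dm x * y * z) + Tr (x * Dm y * z) - Tr (Dm y * x * z) - Tr (y * Dm x * z) := by
    intro x y z
    rw [Ring.lie_def, psi_eq_Tr, Dm_sub, Dm_mul, Dm_mul, sub_mul, add_mul, add_mul,
      Tr_sub, Tr_add, Tr_add]
    ring
  rw [expand, expand, expand]
  have n2 : Tr (a * Dm b * c) = Tr (Dm b * (c * a)) := by rw [Tr_assoc, Tr_rot]
  have n3 : Tr (Dm b * a * c) = Tr (Dm b * (a * c)) := Tr_assoc _ _ _
  have n4 : Tr (b * Dm a * c) = Tr (Dm a * (c * b)) := by rw [Tr_assoc, Tr_rot]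
  have n6 : Tr (b * Dm c * a) = Tr (Dm c * (a * b)) := by rw [Tr_assoc, Tr_rot]
  have n7 : Tr (Dm c * b * a) = Tr (Dm c * (b * a)) := Tr_assoc _ _ _
  have n8 : Tr (c * Dm b * a) = Tr (Dm b * (a * c)) := by rw [Tr_assoc, Tr_rot]
  have n10 : Tr (c * Dm a * b) = Tr (Dm a * (b * c)) := by rw [Tr_assoc, Tr_rot]
  have n12 : Tr (a * Dm c * b) = Tr (Dm c * (b * a)) := by rw [Tr_assoc, Tr_rot]
  rw [Tr_assoc (Dm a) b c, n2, n3, n4, Tr_assoc (Dm b) c a, n6, n7, n8,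
    Tr_assoc (Dm c) a b, n10, Tr_assoc (Dm a) c b, n12]
  have h1 : Tr (Dm a * (b * c)) + Tr (Dm b * (c * a)) + Tr (Dm c * (a * b)) = 0 := by
    have h0 := Tr_Dm (a * (b * c))
    rw [Dm_mul, Dm_mul, mul_add, Tr_add, Tr_add,
      Tr_rot a (Dm b) c, Tr_rot a b (Dm c), Tr_rot b (Dm c) a] at h0
    linear_combination h0
  have h2 : Tr (Dm a * (c * b)) + Tr (Dm c * (b * a)) + Tr (Dm b * (a * c)) = 0 := by
    have h0 := Tr_Dm (a * (c * b))
    rw [Dm_mul, Dm_mul, mul_add, Tr_add, Tr_add,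
      Tr_rot a (Dm c) b, Tr_rot a c (Dm b), Tr_rot c (Dm b) a] at h0
    linear_combination h0
  linear_combination 2 * h1 - 2 * h2
end
end

section
/- The bracket [(a,λ),(b,μ)] = ([a,b], ψ(a,b)) on 𝔏 × ℂ is bilinear over ℂ, alternating, and satisfies the Jacobi identity; i.e., the central extension L̃(g) = 𝔏 ⊕ ℂc of the loop algebra by the cocycle ψ is a Lie algebra over ℂ. -/
noncomputable section

/-- The bracket of the central extension $\tilde L(g) = 𝔏 ⊕ ℂc$. -/
def brCE {N : ℕ} (x y : Loop N × ℂ) : Loop N × ℂ :=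
  (⁅x.1, y.1⁆, psi x.1 y.1)

open Function Matrix

attribute [local instance 100] LieRing.ofAssociativeRing

namespace CEAux

variable {N : ℕ}

/-- A finset containing all exponents appearing in entries of `a`. -/
def Tset (a : Loop N) : Finset ℤ :=
  Finset.univ.biUnion fun p : Fin N × Fin N => (a p.1 p.2).coeff.support

lemma coeffM_eq_zero {a : Loop N} {n : ℤ} (h : n ∉ Tset a) : coeffM a n = 0 := by
  ext i j
  by_contra hij
  exact h (Finset.mem_biUnion.2 ⟨(i, j), Finset.mem_univ _, Finsupp.mem_support_iff.2 hij⟩)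

lemma suppFin (a : Loop N) {g : ℤ → ℂ} (h : ∀ n, coeffM a n = 0 → g n = 0) :
    (support g).Finite := by
  apply (Tset a).finite_toSet.subset
  intro n hn
  simp only [Function.mem_support] at hn
  simp only [Finset.mem_coe]
  by_contra hmem
  exact hn (h n (coeffM_eq_zero hmem))

lemma coeffM_add (a b : Loop N) (n : ℤ) : coeffM (a + b) n = coeffM a n + coeffM b n := by
  rfl

lemma coeffM_sub (a b : Loop N) (n : ℤ) : coeffM (a - b) n = coeffM a n - coeffM b n := by
  rfl

lemma coeffM_smul (c : ℂ) (a : Loop N) (n : ℤ) : coeffM (c • a) n = c • coeffM a n := by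
  rfl

lemma psi_add_left (a b c : Loop N) : psi (a + b) c = psi a c + psi b c := by
  unfold psi
  rw [← finsum_add_distrib (suppFin a fun n h => by rw [h]; simp)
    (suppFin b fun n h => by rw [h]; simp)]
  apply finsum_congr
  intro n
  rw [coeffM_add, add_mul, trace_add, mul_add]

lemma psi_add_right (a b c : Loop N) : psi a (b + c) = psi a b + psi a c := by
  unfold psi
  rw [← finsum_add_distrib (suppFin a fun n h => by rw [h]; simp)
    (suppFin a fun n h => by rw [h]; simp)]
  apply finsum_congr
  intro n
  rw [coeffM_add, mul_add, trace_add, mul_add]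

lemma psi_sub_right (a b c : Loop N) : psi a (b - c) = psi a b - psi a c := by
  unfold psi
  rw [← finsum_sub_distrib (suppFin a fun n h => by rw [h]; simp)
    (suppFin a fun n h => by rw [h]; simp)]
  apply finsum_congr
  intro n
  rw [coeffM_sub, mul_sub, trace_sub, mul_sub]

lemma psi_smul_left (c : ℂ) (a b : Loop N) : psi (c • a) b = c * psi a b := by
  unfold psi
  rw [← smul_eq_mul, smul_finsum]
  apply finsum_congr
  intro n
  simp only [coeffM_smul, smul_mul_assoc, Matrix.trace_smul, smul_eq_mul]
  ring

lemma psi_smul_right (c : ℂ) (a b : Loop N) : psi a (c • b) = c * psi a b := by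
  unfold psi
  rw [← smul_eq_mul, smul_finsum]
  apply finsum_congr
  intro n
  simp only [coeffM_smul, mul_smul_comm, Matrix.trace_smul, smul_eq_mul]
  ring

lemma psi_skew (a b : Loop N) : psi a b = -psi b a := by
  unfold psi
  rw [← finsum_neg_distrib]
  rw [← finsum_comp_equiv (Equiv.neg ℤ)
    (f := fun n : ℤ => (n : ℂ) * Matrix.trace (coeffM a n * coeffM b (-n)))]
  apply finsum_congr
  intro n
  simp only [Equiv.neg_apply, neg_neg]
  rw [Matrix.trace_mul_comm]
  push_cast
  ring

lemma psi_self (a : Loop N) : psi a a = 0 := by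
  have h := psi_skew a a
  linear_combination h / 2

/-- Coefficient of a product of Laurent polynomials. -/
lemma lcoeff_mul (p q : LaurentPolynomial ℂ) (m : ℤ) :
    (p * q).coeff m = ∑ᶠ k, p.coeff k * q.coeff (m - k) := by
  induction p using AddMonoidAlgebra.induction_linear with
  | zero => simp
  | add f g hf hg =>
    have hfin : ∀ r : LaurentPolynomial ℂ, (support fun k => r.coeff k * q.coeff (m - k)).Finite := by
      intro r
      apply r.coeff.support.finite_toSet.subset
      intro k hk
      simp only [Function.mem_support] at hk
      exact Finset.mem_coe.2 (Finsupp.mem_support_iff.2 (left_ne_zero_of_mul hk))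
    rw [add_mul, AddMonoidAlgebra.coeff_add, Finsupp.add_apply, hf, hg, ← finsum_add_distrib (hfin f) (hfin g)]
    apply finsum_congr
    intro k
    rw [AddMonoidAlgebra.coeff_add, Finsupp.add_apply, add_mul]
  | single n x =>
    have h1 : ∀ k : ℤ, k ≠ n → (AddMonoidAlgebra.single n x : LaurentPolynomial ℂ).coeff k * q.coeff (m - k) = 0 := by
      intro k hk
      rw [AddMonoidAlgebra.coeff_single, Finsupp.single_eq_of_ne' (Ne.symm hk), zero_mul]
    rw [finsum_eq_single _ n h1, AddMonoidAlgebra.coeff_single, Finsupp.single_eq_same]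
    exact AddMonoidAlgebra.coeff_single_mul_eq_mul_coeff _ (fun m' _ => by omega)

lemma coeffM_mul (b c : Loop N) (m : ℤ) :
    coeffM (b * c) m = ∑ k ∈ Tset b, coeffM b k * coeffM c (m - k) := by
  ext i j
  have h1 : coeffM (b * c) m i j = ∑ l, ((b i l * c l j).coeff m) := by
    show ((b * c) i j).coeff m = _
    rw [Matrix.mul_apply, AddMonoidAlgebra.coeff_sum, Finsupp.finset_sum_apply]
  rw [h1]
  have h2 : ∀ l, ((b i l * c l j).coeff m) = ∑ k ∈ Tset b, (b i l).coeff k * (c l j).coeff (m - k) := by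
    intro l
    rw [lcoeff_mul]
    apply finsum_eq_finset_sum_of_support_subset
    intro k hk
    simp only [Function.mem_support] at hk
    exact Finset.mem_coe.2 (Finset.mem_biUnion.2 ⟨(i, l), Finset.mem_univ _,
      Finsupp.mem_support_iff.2 (left_ne_zero_of_mul hk)⟩)
  simp only [h2]
  rw [Finset.sum_comm]
  simp [Matrix.sum_apply, Matrix.mul_apply, coeffM]

/-- The triple coefficient function. -/
def F (a b c : Loop N) (p : ℤ × ℤ) : ℂ :=
  Matrix.trace (coeffM a p.1 * (coeffM b p.2 * coeffM c (-p.1 - p.2)))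

lemma F_zero {a b c : Loop N} {p : ℤ × ℤ}
    (h : coeffM a p.1 = 0 ∨ coeffM b p.2 = 0) : F a b c p = 0 := by
  rcases h with h | h <;> simp [F, h]

lemma suppFinF (a b c : Loop N) {g : ℤ × ℤ → ℂ}
    (hg : ∀ p, F a b c p = 0 → g p = 0) : (support g).Finite := by
  apply ((Tset a ×ˢ Tset b).finite_toSet).subset
  intro p hp
  simp only [Function.mem_support] at hp
  simp only [Finset.coe_product, Set.mem_prod, Finset.mem_coe]
  constructor
  · by_contra hm
    exact hp (hg p (F_zero (Or.inl (coeffM_eq_zero hm))))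
  · by_contra hm
    exact hp (hg p (F_zero (Or.inr (coeffM_eq_zero hm))))

lemma psi_mul (a b c : Loop N) :
    psi a (b * c) = ∑ᶠ p : ℤ × ℤ, (p.1 : ℂ) * F a b c p := by
  have hsub : support (fun p : ℤ × ℤ => (p.1 : ℂ) * F a b c p) ⊆ ↑(Tset a ×ˢ Tset b) := by
    intro p hp
    simp only [Function.mem_support] at hp
    simp only [Finset.coe_product, Set.mem_prod, Finset.mem_coe]
    constructor
    · by_contra hm
      exact hp (by rw [F_zero (Or.inl (coeffM_eq_zero hm)), mul_zero])
    · by_contra hm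
      exact hp (by rw [F_zero (Or.inr (coeffM_eq_zero hm)), mul_zero])
  have hsub1 : support (fun n : ℤ =>
      (n : ℂ) * Matrix.trace (coeffM a n * coeffM (b * c) (-n))) ⊆ ↑(Tset a) := by
    intro n hn
    simp only [Function.mem_support] at hn
    simp only [Finset.mem_coe]
    by_contra hm
    exact hn (by rw [coeffM_eq_zero hm]; simp)
  rw [finsum_eq_finset_sum_of_support_subset _ hsub, Finset.sum_product]
  unfold psi
  rw [finsum_eq_finset_sum_of_support_subset _ hsub1]
  apply Finset.sum_congr rfl
  intro n _
  rw [coeffM_mul b c (-n), Finset.mul_sum, trace_sum, Finset.mul_sum]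
  apply Finset.sum_congr rfl
  intro k _
  simp only [F]

lemma cyc (w : ℤ × ℤ → ℂ) (a b c : Loop N) :
    ∑ᶠ p : ℤ × ℤ, w (p.2, -p.1 - p.2) * F a b c p = ∑ᶠ q : ℤ × ℤ, w q * F b c a q := by
  apply finsum_eq_of_bijective (fun p : ℤ × ℤ => (p.2, -p.1 - p.2))
  · constructor
    · intro p q h
      simp only [Prod.mk.injEq] at h
      obtain ⟨x, y⟩ := p
      obtain ⟨u, v⟩ := q
      simp only [Prod.mk.injEq]
      simp only at h
      omega
    · intro q
      obtain ⟨u, v⟩ := q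
      exact ⟨(-u - v, u), by ext <;> simp <;> ring⟩
  · intro p
    congr 1
    simp only [F]
    rw [show -p.2 - (-p.1 - p.2) = p.1 by ring]
    rw [Matrix.trace_mul_comm, mul_assoc]

lemma rho_cyc (a b c : Loop N) :
    (∑ᶠ p : ℤ × ℤ, (p.1 : ℂ) * F a b c p) + (∑ᶠ p : ℤ × ℤ, (p.1 : ℂ) * F b c a p)
      + (∑ᶠ p : ℤ × ℤ, (p.1 : ℂ) * F c a b p) = 0 := by
  have h2 : ∑ᶠ p : ℤ × ℤ, (p.1 : ℂ) * F b c a p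
      = ∑ᶠ p : ℤ × ℤ, (p.2 : ℂ) * F a b c p :=
    (cyc (fun q => (q.1 : ℂ)) a b c).symm
  have h3 : ∑ᶠ p : ℤ × ℤ, (p.1 : ℂ) * F c a b p
      = ∑ᶠ p : ℤ × ℤ, ((-p.1 - p.2 : ℤ) : ℂ) * F a b c p := by
    have s1 : ∑ᶠ p : ℤ × ℤ, (p.2 : ℂ) * F b c a p
        = ∑ᶠ q : ℤ × ℤ, (q.1 : ℂ) * F c a b q := cyc (fun q => (q.1 : ℂ)) b c a
    have s2 : ∑ᶠ p : ℤ × ℤ, ((-p.1 - p.2 : ℤ) : ℂ) * F a b c p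
        = ∑ᶠ q : ℤ × ℤ, (q.2 : ℂ) * F b c a q := cyc (fun q => (q.2 : ℂ)) a b c
    rw [← s1, ← s2]
  rw [h2, h3]
  have hf1 : (support fun p : ℤ × ℤ => (p.1 : ℂ) * F a b c p).Finite :=
    suppFinF a b c fun p h => by rw [h, mul_zero]
  have hf2 : (support fun p : ℤ × ℤ => (p.2 : ℂ) * F a b c p).Finite :=
    suppFinF a b c fun p h => by rw [h, mul_zero]
  have hf3 : (support fun p : ℤ × ℤ =>
      (p.1 : ℂ) * F a b c p + (p.2 : ℂ) * F a b c p).Finite :=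
    suppFinF a b c fun p h => by rw [h]; ring
  rw [← finsum_add_distrib hf1 hf2, ← finsum_add_distrib hf3
    (suppFinF a b c fun p h => by rw [h, mul_zero])]
  have : ∀ p : ℤ × ℤ,
      (p.1 : ℂ) * F a b c p + (p.2 : ℂ) * F a b c p + ((-p.1 - p.2 : ℤ) : ℂ) * F a b c p = 0 := by
    intro p
    push_cast
    ring
  rw [finsum_congr this, finsum_zero]

lemma psi_cocycle (a b c : Loop N) :
    psi a ⁅b, c⁆ + psi b ⁅c, a⁆ + psi c ⁅a, b⁆ = 0 := by
  simp only [Ring.lie_def]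
  rw [psi_sub_right, psi_sub_right, psi_sub_right,
    psi_mul, psi_mul, psi_mul, psi_mul, psi_mul, psi_mul]
  have h1 := rho_cyc a b c
  have h2 := rho_cyc a c b
  linear_combination h1 - h2

end CEAux

/-- The central extension of the loop algebra by the cocycle ψ is a Lie algebra over ℂ:
the bracket is ℂ-bilinear, alternating and satisfies the Jacobi identity. -/
theorem centralExtension_isLieAlgebra (N : ℕ) (hN : 0 < N) :
    (∀ x y z : Loop N × ℂ, brCE (x + y) z = brCE x z + brCE y z) ∧
    (∀ (c : ℂ) (x y : Loop N × ℂ), brCE (c • x) y = c • brCE x y) ∧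
    (∀ x y z : Loop N × ℂ, brCE x (y + z) = brCE x y + brCE x z) ∧
    (∀ (c : ℂ) (x y : Loop N × ℂ), brCE x (c • y) = c • brCE x y) ∧
    (∀ x : Loop N × ℂ, brCE x x = 0) ∧
    (∀ x y z : Loop N × ℂ, brCE x (brCE y z) + brCE y (brCE z x) + brCE z (brCE x y) = 0) := by
  refine ⟨?_, ?_, ?_, ?_, ?_, ?_⟩
  · intro x y z
    simp only [brCE, Prod.fst_add, Prod.mk_add_mk, add_lie, CEAux.psi_add_left]
  · intro c x y
    simp only [brCE, Prod.smul_fst, Prod.smul_mk, smul_lie, CEAux.psi_smul_left, smul_eq_mul]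
  · intro x y z
    simp only [brCE, Prod.fst_add, Prod.mk_add_mk, lie_add, CEAux.psi_add_right]
  · intro c x y
    simp only [brCE, Prod.smul_fst, Prod.smul_mk, lie_smul, CEAux.psi_smul_right, smul_eq_mul]
  · intro x
    simp only [brCE, lie_self, CEAux.psi_self, Prod.mk_eq_zero, and_self]
  · intro x y z
    simp only [brCE, Prod.mk_add_mk, Prod.mk_eq_zero]
    exact ⟨lie_jacobi x.1 y.1 z.1, CEAux.psi_cocycle x.1 y.1 z.1⟩
end
end

section
/- Let U ∈ 𝔏 be invertible (a unit of the matrix ring over LaurentPolynomial ℂ). Then for all a, b ∈ 𝔏: ψ(U*a*U⁻¹, U*b*U⁻¹) = ψ(a,b) + Res(trace(U⁻¹ * U' * [a,b])), where U' denotes the entrywise Laurent derivative, i.e. (U')ₙ = (n+1)·U_{n+1} for all n ∈ ℤ, and Res(P) denotes the coefficient of t⁻¹ of a Laurent polynomial P. -/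
noncomputable section

/-- The entrywise Laurent derivative: `(Uʹ)ₙ = (n+1)·U_{n+1}`. -/
def derM {N : ℕ} (a : Loop N) : Loop N :=
  fun i j => AddMonoidAlgebra.ofCoeff (Finsupp.sum (a i j).coeff fun n c => Finsupp.single (n - 1) ((n : ℂ) * c))

/-- The residue of a Laurent polynomial: the coefficient of `t⁻¹`. -/
def res (p : LaurentPolynomial ℂ) : ℂ := p.coeff (-1)

def der (p : LaurentPolynomial ℂ) : LaurentPolynomial ℂ :=
  AddMonoidAlgebra.ofCoeff (Finsupp.sum p.coeff fun n c => Finsupp.single (n - 1) ((n : ℂ) * c))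

lemma der_apply (p : LaurentPolynomial ℂ) (k : ℤ) :
    (der p).coeff k = ((k : ℂ) + 1) * p.coeff (k + 1) := by
  rw [der, Finsupp.sum_apply]
  rw [Finsupp.sum]
  simp only [Finsupp.single_apply, sub_eq_iff_eq_add]
  rw [Finset.sum_ite_eq' p.coeff.support (k+1) (fun n => (n:ℂ) * p.coeff n)]
  split_ifs with h
  · push_cast; ring
  · simp [Finsupp.notMem_support_iff.mp h]

lemma der_zero : der 0 = 0 := by simp [der]

lemma der_single (n : ℤ) (c : ℂ) : der (AddMonoidAlgebra.single n c) = AddMonoidAlgebra.single (n-1) ((n:ℂ)*c) := by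
  rw [der, AddMonoidAlgebra.coeff_single, Finsupp.sum_single_index, AddMonoidAlgebra.ofCoeff_single]; simp

lemma der_add (p q : LaurentPolynomial ℂ) : der (p + q) = der p + der q := by
  ext k
  rw [AddMonoidAlgebra.coeff_add, Finsupp.add_apply, der_apply, der_apply, der_apply, AddMonoidAlgebra.coeff_add, Finsupp.add_apply]
  ring

lemma der_mul (p q : LaurentPolynomial ℂ) : der (p * q) = der p * q + p * der q := by
  induction p using AddMonoidAlgebra.induction_linear with
  | zero => simp [der_zero]
  | add f g hf hg => rw [add_mul, der_add, der_add, hf, hg]; ring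
  | single m c =>
    induction q using AddMonoidAlgebra.induction_linear with
    | zero => simp [der_zero]
    | add f g hf hg => rw [mul_add, der_add, der_add, hf, hg]; ring
    | single n d =>
      show der (AddMonoidAlgebra.single m c * AddMonoidAlgebra.single n d) = _
      rw [AddMonoidAlgebra.single_mul_single, der_single, der_single, der_single,
        AddMonoidAlgebra.single_mul_single, AddMonoidAlgebra.single_mul_single]
      have h1 : m - 1 + n = m + n - 1 := by ring
      have h2 : m + (n - 1) = m + n - 1 := by ring
      rw [h1, h2, ← AddMonoidAlgebra.single_add]
      congr 1
      push_cast; ring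

lemma der_sum {ι : Type*} (s : Finset ι) (f : ι → LaurentPolynomial ℂ) :
    der (∑ i ∈ s, f i) = ∑ i ∈ s, der (f i) := by
  induction s using Finset.cons_induction with
  | empty => simp [der_zero]
  | cons i s hi ih => rw [Finset.sum_cons, der_add, ih, Finset.sum_cons]

lemma der_one : der (1 : LaurentPolynomial ℂ) = 0 := by
  have : (1 : LaurentPolynomial ℂ) = AddMonoidAlgebra.single 0 1 := rfl
  rw [this, der_single]; simp

-- key scalar lemma
lemma scalar_key (p q : LaurentPolynomial ℂ) :
    ∑ᶠ n : ℤ, (n : ℂ) * (p.coeff n * q.coeff (-n)) = (der p * q).coeff (-1) := by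
  have hmul : ∀ (r : LaurentPolynomial ℂ), (r * q).coeff (-1) = ∑ᶠ k : ℤ, r.coeff k * q.coeff (-1 - k) := by
    intro r
    have hr : r * q = Finsupp.sum r.coeff fun k c => AddMonoidAlgebra.single k c * q := by
      rw [← Finsupp.sum_mul]
      congr 1
      exact (AddMonoidAlgebra.sum_coeff_single r).symm
    rw [hr, AddMonoidAlgebra.coeff_finsuppSum, Finsupp.sum_apply]
    rw [Finsupp.sum]
    simp only [AddMonoidAlgebra.coeff_single_mul_apply]
    rw [finsum_eq_sum_of_support_subset (fun k => r.coeff k * q.coeff (-1 - k)) ?_]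
    · apply Finset.sum_congr rfl
      intro k _
      congr 1
      ring_nf
    · intro k hk
      simp only [Function.mem_support, ne_eq] at hk
      by_contra h
      exact hk (by simp [Finsupp.notMem_support_iff.mp h])
  rw [hmul (der p)]
  simp only [der_apply]
  rw [← finsum_comp_equiv (Equiv.addRight (1 : ℤ)) (f := fun n => (n:ℂ) * (p.coeff n * q.coeff (-n)))]
  apply finsum_congr
  intro k
  simp only [Equiv.coe_addRight]
  have h1 : -(k + 1) = -1 - k := by ring
  rw [h1]
  push_cast
  ring

lemma derM_apply {N : ℕ} (a : Loop N) (i j : Fin N) : derM a i j = der (a i j) := rfl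

lemma psi_eq {N : ℕ} (a b : Loop N) : psi a b = res (Matrix.trace (derM a * b)) := by
  classical
  set S : Finset ℤ := Finset.biUnion Finset.univ (fun p : Fin N × Fin N => (a p.1 p.2).coeff.support)
    with hS
  have hmem : ∀ (i k : Fin N) (n : ℤ), n ∉ S → (a i k).coeff n = 0 := by
    intro i k n hn
    by_contra h
    exact hn (Finset.mem_biUnion.mpr ⟨(i,k), Finset.mem_univ _, Finsupp.mem_support_iff.mpr h⟩)
  have hL : psi a b = ∑ n ∈ S, ∑ i : Fin N, ∑ k : Fin N,
      (n:ℂ) * ((a i k).coeff n * (b k i).coeff (-n)) := by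
    rw [psi]
    rw [finsum_eq_sum_of_support_subset _ (s := S) ?_]
    · apply Finset.sum_congr rfl
      intro n _
      rw [Matrix.trace, Finset.mul_sum]
      apply Finset.sum_congr rfl
      intro i _
      rw [Matrix.diag_apply, Matrix.mul_apply, Finset.mul_sum]
      rfl
    · intro n hn
      simp only [Function.mem_support, ne_eq] at hn
      by_contra h
      apply hn
      have : coeffM a n = 0 := by
        ext i k; exact hmem i k n h
      simp [this]
  have hR : res (Matrix.trace (derM a * b)) = ∑ i : Fin N, ∑ k : Fin N,
      ∑ n ∈ S, (n:ℂ) * ((a i k).coeff n * (b k i).coeff (-n)) := by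
    rw [Matrix.trace, res, AddMonoidAlgebra.coeff_sum, Finsupp.finset_sum_apply]
    apply Finset.sum_congr rfl
    intro i _
    rw [Matrix.diag_apply, Matrix.mul_apply, AddMonoidAlgebra.coeff_sum, Finsupp.finset_sum_apply]
    apply Finset.sum_congr rfl
    intro k _
    rw [derM_apply]
    rw [show (der (a i k) * b k i).coeff (-1) = res (der (a i k) * b k i) from rfl]
    rw [res, ← scalar_key]
    rw [finsum_eq_sum_of_support_subset _ (s := S) ?_]
    intro n hn
    simp only [Function.mem_support, ne_eq] at hn
    by_contra h
    exact hn (by simp [hmem i k n h])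
  rw [hL, hR]
  rw [Finset.sum_comm]
  apply Finset.sum_congr rfl
  intro i _
  rw [Finset.sum_comm]

lemma res_add (p q : LaurentPolynomial ℂ) : res (p + q) = res p + res q :=
  Finsupp.add_apply p.coeff q.coeff (-1)

lemma derM_mul {N : ℕ} (x y : Loop N) : derM (x * y) = derM x * y + x * derM y := by
  refine Matrix.ext fun i j => ?_
  rw [Matrix.add_apply, derM_apply, Matrix.mul_apply, der_sum, Matrix.mul_apply,
    Matrix.mul_apply, ← Finset.sum_add_distrib]
  apply Finset.sum_congr rfl
  intro k _
  rw [der_mul, derM_apply, derM_apply]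

lemma derM_one {N : ℕ} : derM (1 : Loop N) = 0 := by
  ext i j
  rw [derM_apply, Matrix.one_apply]
  split_ifs with h
  · simp [der_one]
  · simp [der_zero]
  
lemma derM_inv {N : ℕ} (U : (Loop N)ˣ) :
    derM (↑U⁻¹ : Loop N) = -((↑U⁻¹ : Loop N) * derM (U : Loop N) * (↑U⁻¹ : Loop N)) := by
  have h : derM ((U : Loop N) * (↑U⁻¹ : Loop N)) = 0 := by
    rw [Units.mul_inv, derM_one]
  rw [derM_mul] at h
  have h2 := congrArg (fun m => (↑U⁻¹ : Loop N) * m) h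
  simp only [mul_add, ← Matrix.mul_assoc, Units.inv_mul, Matrix.one_mul, mul_zero] at h2
  linear_combination (norm := (simp only [Matrix.mul_assoc]; noncomm_ring)) h2

/-- Behaviour of the cocycle under conjugation by a unit `U` of the loop algebra:
`ψ(U a U⁻¹, U b U⁻¹) = ψ(a,b) + Res(tr(U⁻¹ Uʹ [a,b]))`. -/
theorem psi_conj (N : ℕ) (hN : 0 < N) (U : (Loop N)ˣ) (a b : Loop N) :
    psi ((U : Loop N) * a * (↑U⁻¹ : Loop N)) ((U : Loop N) * b * (↑U⁻¹ : Loop N)) =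
      psi a b + res (Matrix.trace ((↑U⁻¹ : Loop N) * derM (U : Loop N) * ⁅a, b⁆)) := by
  rw [psi_eq, psi_eq, ← res_add]
  congr 1
  have hVU : ∀ x : Loop N, (↑U⁻¹ : Loop N) * ((U : Loop N) * x) = x := by
    intro x
    rw [← Matrix.mul_assoc, Units.inv_mul, Matrix.one_mul]
  have hVU1 : ∀ x : Loop N, x * (↑U⁻¹ : Loop N) * (U : Loop N) = x := by
    intro x
    rw [Matrix.mul_assoc, Units.inv_mul, Matrix.mul_one]
  set V : Loop N := (↑U⁻¹ : Loop N) with hV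
  set W : Loop N := derM (U : Loop N) with hW
  have expand : derM ((U : Loop N) * a * V) =
      W * a * V + (U : Loop N) * derM a * V - (U : Loop N) * a * (V * W * V) := by
    rw [derM_mul, derM_mul, hV, derM_inv, ← hV, ← hW]
    noncomm_ring
  rw [expand, sub_mul, add_mul, Matrix.trace_sub, Matrix.trace_add]
  have t1 : W * a * V * ((U : Loop N) * b * V) = W * (a * b) * V := by
    simp only [Matrix.mul_assoc, hVU]
  have t2 : (U : Loop N) * derM a * V * ((U : Loop N) * b * V) =
      (U : Loop N) * (derM a * b * V) := by
    simp only [Matrix.mul_assoc, hVU]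
  have t3 : (U : Loop N) * a * (V * W * V) * ((U : Loop N) * b * V) =
      (U : Loop N) * (a * (V * W * (b * V))) := by
    simp only [Matrix.mul_assoc, hVU]
  rw [t1, t2, t3]
  have s1 : Matrix.trace (W * (a * b) * V) = Matrix.trace (V * W * (a * b)) := by
    rw [Matrix.trace_mul_comm, ← Matrix.mul_assoc]
  have hVU2 : V * (U : Loop N) = 1 := Units.inv_mul U
  have s2 : Matrix.trace ((U : Loop N) * (derM a * b * V)) = Matrix.trace (derM a * b) := by
    rw [Matrix.trace_mul_comm, hVU1]
  have s3 : Matrix.trace ((U : Loop N) * (a * (V * W * (b * V)))) =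
      Matrix.trace (V * W * (b * a)) := by
    rw [Matrix.trace_mul_comm]
    have e : a * (V * W * (b * V)) * (U : Loop N) = a * (V * W * b) := by
      simp only [Matrix.mul_assoc, hVU2, Matrix.mul_one]
    rw [e, Matrix.trace_mul_comm]
    simp only [Matrix.mul_assoc]
  rw [s1, s2, s3]
  rw [Ring.lie_def, mul_sub, Matrix.trace_sub]
  ring
end
end
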